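/- Every inclusion ambiguity of R with respect to ≤ is of the form (b^{vᵀ}_{n,n}, b^v_{n,n}, 1, 1) for some v ∈ V, where 1 denotes the empty word. -/

import Mathlib

/-!
Common setting (from the paper "The Anick resolution of the co-unit of the free unitary
quantum group", arXiv:2403.06663):

`k` is a field and `n ≥ 2`.  `S` is the set of `2n²` generators `u∘_{j,i}, u•_{j,i}`,
`(j,i) ∈ {1,…,n}²`, with the involution `*` exchanging `u∘_{j,i}` and `u•_{j,i}`.
Indices are realized `0`-based as elements of `Fin n` (so the index `1` is `fin1 = 0`,
the index `n` is `finN = n-1`, and `σ(i) = n-i+1` is `Fin.rev`).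
-/

namespace UnPlusAnick

/-- A generator: a color (`false` = white `∘`, `true` = black `•`) and a pair of indices. -/
abbrev Gen (n : ℕ) := Bool × Fin n × Fin n

/-- The involution `*` on the generators: it flips the color and keeps the indices. -/
def genStar {n : ℕ} (g : Gen n) : Gen n := (!g.1, g.2)

/-- An `n × n` matrix with entries in the set of generators. -/
abbrev Mat (n : ℕ) := Fin n → Fin n → Gen n

/-- The fundamental matrix `u`, `u_{j,i} = u∘_{j,i}`. -/
def uMat (n : ℕ) : Mat n := fun j i => (false, j, i)

/-- The transpose `vᵀ`. -/
def mT {n : ℕ} (v : Mat n) : Mat n := fun j i => v i j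

/-- The matrix `v^σ`, `(v^σ)_{j,i} = (v_{σ(j),σ(i)})^*`. -/
def mS {n : ℕ} (v : Mat n) : Mat n := fun j i => genStar (v j.rev i.rev)

/-- The matrix `v^δ`, `(v^δ)_{j,i} = (v_{σ(i),σ(j)})^*`; thus `v^δ = (v^σ)ᵀ`. -/
def mD {n : ℕ} (v : Mat n) : Mat n := fun j i => genStar (v i.rev j.rev)

/-- The set `V = {u, uᵀ, u^σ, u^δ}`. -/
def V (n : ℕ) : Set (Mat n) := {uMat n, mT (uMat n), mS (uMat n), mD (uMat n)}

/-- The index `1` of `{1, …, n}`, as the `0`-based element `0` of `Fin n`. -/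
def fin1 (n : ℕ) (hn : 2 ≤ n) : Fin n := ⟨0, by omega⟩

/-- The index `n` of `{1, …, n}`, as the `0`-based element `n - 1` of `Fin n`. -/
def finN (n : ℕ) (hn : 2 ≤ n) : Fin n := ⟨n - 1, by omega⟩

theorem genStar_genStar {n : ℕ} (g : Gen n) : genStar (genStar g) = g := by simp [genStar]

theorem mS_mS {n : ℕ} (v : Mat n) : mS (mS v) = v := by
  funext j i; simp [mS, genStar_genStar]

theorem mD_mD {n : ℕ} (v : Mat n) : mD (mD v) = v := by
  funext j i; simp [mD, genStar_genStar]

theorem mS_mD {n : ℕ} (v : Mat n) : mS (mD v) = mT v := by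
  funext j i; simp [mS, mD, mT, genStar_genStar]

theorem mD_mS {n : ℕ} (v : Mat n) : mD (mS v) = mT v := by
  funext j i; simp [mS, mD, mT, genStar_genStar]

/-- `V` is closed under transposition. -/
theorem V_mT {n : ℕ} {v : Mat n} (hv : v ∈ V n) : mT v ∈ V n := by
  simp only [V, Set.mem_insert_iff, Set.mem_singleton_iff] at hv ⊢
  rcases hv with rfl | rfl | rfl | rfl
  · exact Or.inr (Or.inl rfl)
  · exact Or.inl rfl
  · exact Or.inr (Or.inr (Or.inr rfl))
  · exact Or.inr (Or.inr (Or.inl rfl))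

/-- `V` is closed under `v ↦ v^σ`. -/
theorem V_mS {n : ℕ} {v : Mat n} (hv : v ∈ V n) : mS v ∈ V n := by
  simp only [V, Set.mem_insert_iff, Set.mem_singleton_iff] at hv ⊢
  rcases hv with rfl | rfl | rfl | rfl
  · exact Or.inr (Or.inr (Or.inl rfl))
  · exact Or.inr (Or.inr (Or.inr rfl))
  · exact Or.inl (mS_mS _)
  · exact Or.inr (Or.inl (mS_mD _))

/-- `V` is closed under `v ↦ v^δ`. -/
theorem V_mD {n : ℕ} {v : Mat n} (hv : v ∈ V n) : mD v ∈ V n := by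
  simp only [V, Set.mem_insert_iff, Set.mem_singleton_iff] at hv ⊢
  rcases hv with rfl | rfl | rfl | rfl
  · exact Or.inr (Or.inr (Or.inr rfl))
  · exact Or.inr (Or.inr (Or.inl rfl))
  · exact Or.inr (Or.inl (mD_mS _))
  · exact Or.inl (mD_mD _)

/-! ### Words and the free algebra -/

/-- Words in the generators: the free monoid over the set of generators. -/
abbrev Word (n : ℕ) := FreeMonoid (Gen n)

/-- The free unital associative `k`-algebra on the generators, realized as the monoid algebra
of the free monoid of words; its canonical `k`-basis is the set of words. -/
abbrev FreeAlg (k : Type*) [Field k] (n : ℕ) := MonoidAlgebra k (Word n)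

/-- A word, viewed as a monomial in the free algebra. -/
noncomputable def wd (k : Type*) [Field k] {n : ℕ} (w : Word n) : FreeAlg k n :=
  MonoidAlgebra.of k (Word n) w

/-- The relation `b^v_{j,i} = ∑_{s=1}^{n} v_{j,σ(s)} (v^δ)_{s,σ(i)} − δ_{j,i} · 1`. -/
noncomputable def brel (k : Type*) [Field k] {n : ℕ} (v : Mat n) (j i : Fin n) : FreeAlg k n :=
  (∑ s : Fin n, wd k (FreeMonoid.of (v j s.rev) * FreeMonoid.of (mD v s i.rev)))
    - if j = i then 1 else 0

/-- The set of relations `R = {b^v_{j,i} : v ∈ V, (j,i) ∈ {1,…,n}²}`. -/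
def rels (k : Type*) [Field k] (n : ℕ) : Set (FreeAlg k n) :=
  {x | ∃ v ∈ V n, ∃ j i : Fin n, x = brel k v j i}

/-- `b̃^v = v_{n,n}(v^δ)_{1,1} − ∑_{s=2}^{n} ∑_{t=1}^{n−1} v_{t,σ(s)}(v^δ)_{s,σ(t)} + (n−2)·1`. -/
noncomputable def btil (k : Type*) [Field k] (n : ℕ) (hn : 2 ≤ n) (v : Mat n) : FreeAlg k n :=
  wd k (FreeMonoid.of (v (finN n hn) (finN n hn)) * FreeMonoid.of (mD v (fin1 n hn) (fin1 n hn)))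
    - (∑ s ∈ Finset.univ.filter (fun s : Fin n => s ≠ fin1 n hn),
        ∑ t ∈ Finset.univ.filter (fun t : Fin n => t ≠ finN n hn),
          wd k (FreeMonoid.of (v t s.rev) * FreeMonoid.of (mD v s t.rev)))
    + ((n - 2 : ℕ) : FreeAlg k n)

/-! ### The monomial order and tips -/

/-- The strict order on the generators: every black generator is smaller than every white one;
`u•_{t,s} < u•_{j,i}` iff `(j,i) <` `(t,s)` lexicographically, and `u∘_{t,s} < u∘_{j,i}` iff
`(t,s) < (j,i)` lexicographically. -/
def genLT {n : ℕ} (g h : Gen n) : Prop :=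
  (g.1 = true ∧ h.1 = false) ∨
    (g.1 = true ∧ h.1 = true ∧ toLex h.2 < toLex g.2) ∨
    (g.1 = false ∧ h.1 = false ∧ toLex g.2 < toLex h.2)

/-- The degreewise lexicographic extension of the order on generators to words:
`w ≤ w'` iff `w = w'`, or `w` is shorter than `w'`, or they have the same length and `w`
precedes `w'` lexicographically letter by letter. -/
def wordLE {n : ℕ} (w w' : Word n) : Prop :=
  w = w' ∨ (FreeMonoid.toList w).length < (FreeMonoid.toList w').length ∨
    ((FreeMonoid.toList w).length = (FreeMonoid.toList w').length ∧
      List.Lex genLT (FreeMonoid.toList w) (FreeMonoid.toList w'))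

/-- `IsTip f t`: the word `t` is the `≤`-largest word occurring with nonzero coefficient in
`f`, i.e. `Tip(f) = t`. -/
def IsTip (k : Type*) [Field k] {n : ℕ} (f : FreeAlg k n) (t : Word n) : Prop :=
  f.coeff t ≠ 0 ∧ ∀ w : Word n, f.coeff w ≠ 0 → wordLE w t

/-- `w` divides `w'` (as words in the free monoid). -/
def WDvd {n : ℕ} (w w' : Word n) : Prop := ∃ w₁ w₂ : Word n, w' = w₁ * w * w₂

/-! ### The ideal of relations -/

/-- The two-sided ideal `I` of the free algebra generated by the set of relations `R`. -/
noncomputable def idl (k : Type*) [Field k] (n : ℕ) : TwoSidedIdeal (FreeAlg k n) :=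
  TwoSidedIdeal.span (rels k n)

/-- The set `Tip(I)` of tips of nonzero elements of `I`. -/
def TipSet (k : Type*) [Field k] (n : ℕ) : Set (Word n) :=
  {w | ∃ f : FreeAlg k n, f ∈ idl k n ∧ f ≠ 0 ∧ IsTip k f w}

/-! ### Reductions and ambiguities -/

/-- `φ` is a one-step reduction by `f`: there are fixed words `w₁`, `w₂` such that `φ` maps the
word `w₁ Tip(f) w₂` to `w₁ (Tip(f) − c⁻¹ f) w₂`, where `c` is the leading coefficient of `f`,
and fixes every other word. -/
def IsOneStep (k : Type*) [Field k] {n : ℕ} (f : FreeAlg k n)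
    (φ : FreeAlg k n →ₗ[k] FreeAlg k n) : Prop :=
  f ≠ 0 ∧ ∃ (w₁ w₂ t : Word n), IsTip k f t ∧
    φ (wd k (w₁ * t * w₂)) = wd k w₁ * (wd k t - (f.coeff t)⁻¹ • f) * wd k w₂ ∧
    ∀ w : Word n, w ≠ w₁ * t * w₂ → φ (wd k w) = wd k w

/-- A reduction by a set `G`: a finite composition of one-step reductions by nonzero elements
of `G`. -/
inductive IsReduction (k : Type*) [Field k] {n : ℕ} (G : Set (FreeAlg k n)) :
    (FreeAlg k n →ₗ[k] FreeAlg k n) → Prop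
  | id : IsReduction k G LinearMap.id
  | comp {φ ψ : FreeAlg k n →ₗ[k] FreeAlg k n} {g : FreeAlg k n} (hg : g ∈ G)
      (hφ : IsOneStep k g φ) (hψ : IsReduction k G ψ) : IsReduction k G (φ ∘ₗ ψ)

/-- `(g, g', w₁, w₂)` is an inclusion ambiguity of `G`. -/
def IsInclusionAmbiguity (k : Type*) [Field k] {n : ℕ} (G : Set (FreeAlg k n))
    (g g' : FreeAlg k n) (w₁ w₂ : Word n) : Prop :=
  g ∈ G ∧ g' ∈ G ∧ g ≠ 0 ∧ g' ≠ 0 ∧ g ≠ g' ∧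
    ∃ t t' : Word n, IsTip k g t ∧ IsTip k g' t' ∧ w₁ * t * w₂ = t'

/-- The inclusion ambiguity `(g, g', w₁, w₂)` of `G` resolves. -/
def InclusionAmbiguityResolves (k : Type*) [Field k] {n : ℕ} (G : Set (FreeAlg k n))
    (g g' : FreeAlg k n) (w₁ w₂ : Word n) : Prop :=
  ∀ t t' : Word n, IsTip k g t → IsTip k g' t' →
    ∃ φ₁ φ₂ : FreeAlg k n →ₗ[k] FreeAlg k n, IsReduction k G φ₁ ∧ IsReduction k G φ₂ ∧
      φ₁ (wd k t' - (g'.coeff t')⁻¹ • g') = φ₂ (wd k w₁ * (wd k t - (g.coeff t)⁻¹ • g) * wd k w₂)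

/-- `(g₁, g₂, w₁, w₂)` is an overlap ambiguity of `G`. -/
def IsOverlapAmbiguity (k : Type*) [Field k] {n : ℕ} (G : Set (FreeAlg k n))
    (g₁ g₂ : FreeAlg k n) (w₁ w₂ : Word n) : Prop :=
  g₁ ∈ G ∧ g₂ ∈ G ∧ g₁ ≠ 0 ∧ g₂ ≠ 0 ∧ ¬(w₁ = 1 ∧ w₂ = 1) ∧
    ∃ t₁ t₂ : Word n, IsTip k g₁ t₁ ∧ IsTip k g₂ t₂ ∧ t₁ * w₂ = w₁ * t₂ ∧
      ¬WDvd t₂ w₂ ∧ ¬WDvd t₁ w₁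

/-- The overlap ambiguity `(g₁, g₂, w₁, w₂)` of `G` resolves. -/
def OverlapAmbiguityResolves (k : Type*) [Field k] {n : ℕ} (G : Set (FreeAlg k n))
    (g₁ g₂ : FreeAlg k n) (w₁ w₂ : Word n) : Prop :=
  ∀ t₁ t₂ : Word n, IsTip k g₁ t₁ → IsTip k g₂ t₂ →
    ∃ φ₁ φ₂ : FreeAlg k n →ₗ[k] FreeAlg k n, IsReduction k G φ₁ ∧ IsReduction k G φ₂ ∧
      φ₁ ((wd k t₁ - (g₁.coeff t₁)⁻¹ • g₁) * wd k w₂) = φ₂ (wd k w₁ * (wd k t₂ - (g₂.coeff t₂)⁻¹ • g₂))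

/-! ### Gröbner bases -/

/-- `G` is a Gröbner basis of the two-sided ideal `J` with respect to the order: `G ⊆ J` and
the tip of every nonzero element of `J` is divisible by the tip of some nonzero element
of `G`. -/
def IsGroebner (k : Type*) [Field k] {n : ℕ} (G : Set (FreeAlg k n))
    (J : TwoSidedIdeal (FreeAlg k n)) : Prop :=
  (∀ g ∈ G, g ∈ J) ∧
    ∀ f : FreeAlg k n, f ∈ J → f ≠ 0 → ∀ t : Word n, IsTip k f t →
      ∃ g ∈ G, g ≠ 0 ∧ ∃ tg : Word n, IsTip k g tg ∧ WDvd tg t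

/-- A minimal Gröbner basis: `0 ∉ G` and the tip of no element of `G` divides the tip of a
different element of `G`. -/
def IsMinimalGroebner (k : Type*) [Field k] {n : ℕ} (G : Set (FreeAlg k n))
    (J : TwoSidedIdeal (FreeAlg k n)) : Prop :=
  IsGroebner k G J ∧ (0 : FreeAlg k n) ∉ G ∧
    ∀ g ∈ G, ∀ g' ∈ G, g ≠ g' → ∀ t t' : Word n, IsTip k g t → IsTip k g' t' → ¬WDvd t t'

/-- A reduced Gröbner basis: minimal, every element has leading coefficient `1`, and the tip of
no element of `G` divides a word occurring with nonzero coefficient in a different element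
of `G`. -/
def IsReducedGroebner (k : Type*) [Field k] {n : ℕ} (G : Set (FreeAlg k n))
    (J : TwoSidedIdeal (FreeAlg k n)) : Prop :=
  IsMinimalGroebner k G J ∧ (∀ g ∈ G, ∀ t : Word n, IsTip k g t → g.coeff t = 1) ∧
    ∀ g ∈ G, ∀ g' ∈ G, g ≠ g' → ∀ t : Word n, IsTip k g t →
      ∀ w : Word n, g'.coeff w ≠ 0 → ¬WDvd t w

/-! ### Monoidal ideals -/

/-- A monoidal ideal of the free monoid of words: a set of words containing all multiples of
its elements. -/
def IsMonIdeal {n : ℕ} (M : Set (Word n)) : Prop :=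
  ∀ w ∈ M, ∀ w₁ w₂ : Word n, w₁ * w * w₂ ∈ M

/-- `N` generates `M` as a monoidal ideal: `M` is the smallest monoidal ideal containing `N`. -/
def GeneratesMonIdeal {n : ℕ} (N M : Set (Word n)) : Prop :=
  IsMonIdeal M ∧ N ⊆ M ∧ ∀ M' : Set (Word n), IsMonIdeal M' → N ⊆ M' → M ⊆ M'

/-! ### Chain words -/

/-- `v^{[ℓ]}`: equal to `v` for odd `ℓ` and to `v^δ` for even `ℓ`. -/
def pw {n : ℕ} (l : ℕ) (v : Mat n) : Mat n := if l % 2 = 1 then v else mD v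

/-- The word `v^{(ℓ)}_{j,i}` (for `ℓ ≥ 1`). -/
def chainWord (n : ℕ) (hn : 2 ≤ n) (v : Mat n) (l : ℕ) (j i : Fin n) : Word n :=
  if l = 1 then FreeMonoid.of (v j i.rev)
  else if l % 2 = 0 then
    FreeMonoid.of (v j (finN n hn)) *
      (FreeMonoid.of (mD v (fin1 n hn) (finN n hn)) *
          FreeMonoid.of (v (fin1 n hn) (finN n hn))) ^ ((l - 2) / 2) *
      FreeMonoid.of (mD v (fin1 n hn) i.rev)
  else
    FreeMonoid.of (v j (finN n hn)) *
      (FreeMonoid.of (mD v (fin1 n hn) (finN n hn)) *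
          FreeMonoid.of (v (fin1 n hn) (finN n hn))) ^ ((l - 3) / 2) *
      FreeMonoid.of (mD v (fin1 n hn) (finN n hn)) * FreeMonoid.of (v (fin1 n hn) i.rev)

/-- The set `C_ℓ = {v^{(ℓ)}_{j,i} : v ∈ V, (j,i) ∈ {1,…,n}²}` of `ℓ`-chains. -/
def Cset (n : ℕ) (hn : 2 ≤ n) (l : ℕ) : Set (Word n) :=
  {w | ∃ v ∈ V n, ∃ j i : Fin n, w = chainWord n hn v l j i}

/-! ### The quotient algebra `A = F/I`, the counit and the modules of the resolution -/

/-- The relation identifying each element of `R` with `0`; the induced ring congruence realizes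
the quotient `A = F/I` by the two-sided ideal `I` generated by `R`. -/
def relR (k : Type*) [Field k] (n : ℕ) : FreeAlg k n → FreeAlg k n → Prop :=
  fun a b => a ∈ rels k n ∧ b = 0

/-- The `k`-algebra `A = F/I`. -/
abbrev Aq (k : Type*) [Field k] (n : ℕ) := RingQuot (relR k n)

/-- The quotient map `F → A = F/I`. -/
noncomputable def pr (k : Type*) [Field k] (n : ℕ) : FreeAlg k n →ₐ[k] Aq k n :=
  RingQuot.mkAlgHom k (relR k n)

/-- The class `v_{j,i} + I ∈ A` of a generator. -/
noncomputable def gen (k : Type*) [Field k] {n : ℕ} (v : Mat n) (j i : Fin n) : Aq k n :=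
  pr k n (wd k (FreeMonoid.of (v j i)))

/-- The ring homomorphism `Aᵐᵒᵖ →+* k` induced by `ε` (using the commutativity of `k`). -/
noncomputable def epsOp (k : Type*) [Field k] (n : ℕ) (ε : Aq k n →ₐ[k] k) :
    (Aq k n)ᵐᵒᵖ →+* k where
  toFun a := ε a.unop
  map_one' := by simp
  map_mul' a b := by simp [mul_comm]
  map_zero' := by simp
  map_add' a b := by simp

/-- The right `A`-module `k_ε`: the field `k` with the right `A`-action induced by `ε`,
realized as a left module over the opposite algebra `Aᵐᵒᵖ`. -/
def KE (k : Type*) [Field k] (n : ℕ) (_ε : Aq k n →ₐ[k] k) : Type _ := k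

instance (k : Type*) [Field k] (n : ℕ) (ε : Aq k n →ₐ[k] k) : AddCommGroup (KE k n ε) :=
  inferInstanceAs (AddCommGroup k)

instance (k : Type*) [Field k] (n : ℕ) (ε : Aq k n →ₐ[k] k) : Module k (KE k n ε) :=
  inferInstanceAs (Module k k)

instance (k : Type*) [Field k] (n : ℕ) (ε : Aq k n →ₐ[k] k) : One (KE k n ε) := ⟨(1 : k)⟩

noncomputable instance (k : Type*) [Field k] (n : ℕ) (ε : Aq k n →ₐ[k] k) :
    Module ((Aq k n)ᵐᵒᵖ) (KE k n ε) :=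
  Module.compHom k (epsOp k n ε)

instance (k : Type*) [Field k] (n : ℕ) (ε : Aq k n →ₐ[k] k) :
    SMulCommClass ((Aq k n)ᵐᵒᵖ) k (KE k n ε) :=
  ⟨fun a c x => by
    show epsOp k n ε a • (c • x) = c • (epsOp k n ε a • x)
    rw [smul_smul, smul_smul, mul_comm]⟩

/-- The free right `A`-module `P_ℓ = kC_ℓ ⊗ₖ A` with basis `C_ℓ` (for `ℓ ≥ 1`), realized as a
left module over the opposite algebra `Aᵐᵒᵖ`. -/
abbrev Pmod (k : Type*) [Field k] (n : ℕ) (hn : 2 ≤ n) (l : ℕ) :=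
  ↥(Cset n hn l) →₀ Aq k n

/-- The element `v^{(ℓ)}_{j,i} ⊗ a` of `P_ℓ`. -/
noncomputable def bas (k : Type*) [Field k] (n : ℕ) (hn : 2 ≤ n) (l : ℕ) (v : Mat n)
    (hv : v ∈ V n) (j i : Fin n) (a : Aq k n) : Pmod k n hn l :=
  Finsupp.single ⟨chainWord n hn v l j i, ⟨v, hv, j, i, rfl⟩⟩ a

/-- Pre-composition with a homomorphism of right `A`-modules, as the `k`-linear map
`Hom_A(N, k_ε) → Hom_A(M, k_ε)`, `g ↦ g ∘ d`. -/
noncomputable def homMap (k : Type*) [Field k] {n : ℕ} (ε : Aq k n →ₐ[k] k) {M N : Type*}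
    [AddCommMonoid M] [AddCommMonoid N] [Module ((Aq k n)ᵐᵒᵖ) M] [Module ((Aq k n)ᵐᵒᵖ) N]
    (d : M →ₗ[(Aq k n)ᵐᵒᵖ] N) :
    (N →ₗ[(Aq k n)ᵐᵒᵖ] KE k n ε) →ₗ[k] (M →ₗ[(Aq k n)ᵐᵒᵖ] KE k n ε) where
  toFun g := g.comp d
  map_add' _ _ := LinearMap.ext fun _ => rfl
  map_smul' _ _ := LinearMap.ext fun _ => rfl

/-- The right-hand side of the defining formula for `d₂` on the basis element
`v^{(2)}_{j,i} ⊗ 1`. -/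
noncomputable def d2RHS (k : Type*) [Field k] (n : ℕ) (hn : 2 ≤ n) (v : Mat n)
    (hv : v ∈ V n) (j i : Fin n) : Pmod k n hn 1 :=
  (∑ s : Fin n, bas k n hn 1 v hv j s (gen k (mD v) s i.rev))
    + bas k n hn 1 (mD v) (V_mD hv) j.rev i 1
    - (if j = finN n hn ∧ i = finN n hn then
        ∑ s ∈ Finset.univ.filter (fun s : Fin n => s ≠ fin1 n hn),
          ((∑ t : Fin n, bas k n hn 1 v hv t s (gen k (mD v) s t.rev))
            + bas k n hn 1 (mD v) (V_mD hv) s s.rev 1)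
      else 0)

/-- The right-hand side of the defining formula for `d_ℓ`, `ℓ ≥ 3`, on the basis element
`v^{(ℓ)}_{j,i} ⊗ 1`. -/
noncomputable def dTail (k : Type*) [Field k] (n : ℕ) (hn : 2 ≤ n) (l : ℕ) (v : Mat n)
    (hv : v ∈ V n) (j i : Fin n) : Pmod k n hn (l - 1) :=
  (∑ s : Fin n, bas k n hn (l - 1) v hv j s (gen k (pw l v) s i.rev))
    + bas k n hn (l - 1) (mD v) (V_mD hv) j.rev i ((-1 : Aq k n) ^ l)
    + (if j = finN n hn then
        ((bas k n hn (l - 1) (mT v) (V_mT hv) (fin1 n hn) (fin1 n hn)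
              (gen k (pw l (mT v)) i.rev (finN n hn))
            + (if l = 3 then
                ∑ s ∈ Finset.univ.filter (fun s : Fin n => s ≠ fin1 n hn ∧ s ≠ finN n hn),
                  bas k n hn (l - 1) (mT v) (V_mT hv) s s (gen k (pw l (mT v)) i.rev (finN n hn))
              else 0))
          - (if i = finN n hn then
              (∑ s : Fin n, bas k n hn (l - 1) (mT v) (V_mT hv) (fin1 n hn) s
                  (gen k (pw l (mT v)) s (finN n hn)))
                + bas k n hn (l - 1) (mS v) (V_mS hv) (finN n hn) (fin1 n hn) ((-1 : Aq k n) ^ l)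
            else 0))
      else 0)
    + (if j = fin1 n hn ∧ i = finN n hn then
        bas k n hn (l - 1) (mS v) (V_mS hv) (fin1 n hn) (fin1 n hn) ((-1 : Aq k n) ^ l)
          + (if l = 3 then
              ∑ s ∈ Finset.univ.filter (fun s : Fin n => s ≠ fin1 n hn ∧ s ≠ finN n hn),
                bas k n hn (l - 1) (mS v) (V_mS hv) s s ((-1 : Aq k n) ^ l)
            else 0)
      else 0)

/-- The system of identities from STATEMENT 14, for a fixed `v ∈ V`. -/
noncomputable def cond14 (k : Type*) [Field k] {n : ℕ} (hn : 2 ≤ n) (ε : Aq k n →ₐ[k] k)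
    (g : Pmod k n hn 1 →ₗ[(Aq k n)ᵐᵒᵖ] KE k n ε) (v : Mat n) (hv : v ∈ V n) : Prop :=
  ∀ j i : Fin n, g (bas k n hn 1 (mS v) (V_mS hv) j i 1) = -g (bas k n hn 1 v hv i j 1)

/-- The system of identities (1)–(4) from STATEMENT 16, for a fixed `v ∈ V`. -/
noncomputable def cond16 (k : Type*) [Field k] {n : ℕ} (hn : 2 ≤ n) (ε : Aq k n →ₐ[k] k)
    (l : ℕ) (g : Pmod k n hn (l - 1) →ₗ[(Aq k n)ᵐᵒᵖ] KE k n ε) (v : Mat n)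
    (hv : v ∈ V n) : Prop :=
  (∀ j i : Fin n, (j, i) ≠ (fin1 n hn, fin1 n hn) →
      g (bas k n hn (l - 1) (mT v) (V_mT hv) j i 1) =
        -(((-1 : k) ^ l) • g (bas k n hn (l - 1) (mS v) (V_mS hv) j.rev i.rev 1))
          - (if j = finN n hn ∧ i = finN n hn then
              g (bas k n hn (l - 1) v hv (fin1 n hn) (fin1 n hn) 1)
                + (if l = 3 then
                    ∑ s ∈ Finset.univ.filter (fun s : Fin n => s ≠ fin1 n hn ∧ s ≠ finN n hn),
                      g (bas k n hn (l - 1) v hv s s 1)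
                  else 0)
            else 0)) ∧
  (∀ j i : Fin n, (j, i) ≠ (fin1 n hn, fin1 n hn) →
      g (bas k n hn (l - 1) (mD v) (V_mD hv) j i 1) =
        -(((-1 : k) ^ l) • g (bas k n hn (l - 1) v hv j.rev i.rev 1))
          - (if j = finN n hn ∧ i = finN n hn then
              g (bas k n hn (l - 1) (mS v) (V_mS hv) (fin1 n hn) (fin1 n hn) 1)
                + (if l = 3 then
                    ∑ s ∈ Finset.univ.filter (fun s : Fin n => s ≠ fin1 n hn ∧ s ≠ finN n hn),
                      g (bas k n hn (l - 1) (mS v) (V_mS hv) s s 1)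
                  else 0)
            else 0)) ∧
  (g (bas k n hn (l - 1) (mD v) (V_mD hv) (fin1 n hn) (fin1 n hn) 1) =
      -(((-1 : k) ^ l) • g (bas k n hn (l - 1) (mT v) (V_mT hv) (fin1 n hn) (fin1 n hn) 1))
        - ((-1 : k) ^ l) • g (bas k n hn (l - 1) v hv (finN n hn) (finN n hn) 1)
        + (if l = 3 then
            ∑ s ∈ Finset.univ.filter (fun s : Fin n => s ≠ fin1 n hn ∧ s ≠ finN n hn),
              g (bas k n hn (l - 1) (mS v) (V_mS hv) s s 1)
          else 0)) ∧
  (g (bas k n hn (l - 1) (mS v) (V_mS hv) (finN n hn) (finN n hn) 1) =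
      -(if l = 3 then
          ∑ s ∈ Finset.univ.filter (fun s : Fin n => s ≠ fin1 n hn ∧ s ≠ finN n hn),
            g (bas k n hn (l - 1) (mS v) (V_mS hv) s s 1)
        else 0)
        + ((-1 : k) ^ l) • (g (bas k n hn (l - 1) v hv (finN n hn) (finN n hn) 1)
            + (if l = 3 then
                ∑ s ∈ Finset.univ.filter (fun s : Fin n => s ≠ fin1 n hn ∧ s ≠ finN n hn),
                  g (bas k n hn (l - 1) v hv s s 1)
              else 0)))


/-! ### Auxiliary material for STATEMENT 2 -/

section Statement2Aux

variable {k : Type*} [Field k] {n : ℕ}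

/-- The `s`-th monomial word of the relation `b^v_{j,i}`. -/
def mono (v : Mat n) (j i s : Fin n) : Word n :=
  FreeMonoid.of (v j s.rev) * FreeMonoid.of (mD v s i.rev)

theorem toList_mono (v : Mat n) (j i s : Fin n) :
    FreeMonoid.toList (mono v j i s) = [v j s.rev, mD v s i.rev] := by
  simp [mono]

theorem mono_ne_one (v : Mat n) (j i s : Fin n) : mono v j i s ≠ 1 := by
  intro h
  have := congrArg FreeMonoid.toList h
  rw [toList_mono] at this
  simp at this

theorem brel_eq (v : Mat n) (j i : Fin n) :
    brel k v j i = (∑ s : Fin n, MonoidAlgebra.of k (Word n) (mono v j i s))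
      - if j = i then 1 else 0 := rfl

theorem brel_apply_eq_zero {v : Mat n} {j i : Fin n} {w : Word n}
    (h1 : w ≠ 1) (h2 : ∀ s, w ≠ mono v j i s) : (brel k v j i).coeff w = 0 := by
  classical
  rw [brel_eq]
  rw [MonoidAlgebra.coeff_sub, Finsupp.sub_apply, MonoidAlgebra.coeff_sum, Finsupp.finset_sum_apply]
  have hs : ∀ s : Fin n, (MonoidAlgebra.of k (Word n) (mono v j i s)).coeff w = 0 := by
    intro s
    rw [MonoidAlgebra.of_apply, MonoidAlgebra.coeff_single, Finsupp.single_apply, if_neg]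
    intro h; exact h2 s h.symm
  rw [Finset.sum_congr rfl (fun s _ => hs s), Finset.sum_const_zero]
  split
  · rw [MonoidAlgebra.one_def, MonoidAlgebra.coeff_single, Finsupp.single_apply, if_neg (fun h => h1 h.symm)]
    simp
  · simp

theorem brel_apply_mono {v : Mat n} {j i : Fin n}
    (hinj : Function.Injective (mono v j i)) (s : Fin n) :
    (brel k v j i).coeff (mono v j i s) = 1 := by
  classical
  rw [brel_eq]
  rw [MonoidAlgebra.coeff_sub, Finsupp.sub_apply, MonoidAlgebra.coeff_sum, Finsupp.finset_sum_apply]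
  have hs : ∀ s' : Fin n, (MonoidAlgebra.of k (Word n) (mono v j i s')).coeff (mono v j i s)
      = if s' = s then (1:k) else 0 := by
    intro s'
    rw [MonoidAlgebra.of_apply, MonoidAlgebra.coeff_single, Finsupp.single_apply]
    simp [hinj.eq_iff]
  rw [Finset.sum_congr rfl (fun s' _ => hs s'), Finset.sum_ite_eq' Finset.univ s (fun _ => (1:k))]
  have : (if j = i then (1 : FreeAlg k n) else 0).coeff (mono v j i s) = 0 := by
    split
    · rw [MonoidAlgebra.one_def, MonoidAlgebra.coeff_single, Finsupp.single_apply,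
        if_neg (fun h => mono_ne_one v j i s h.symm)]
    · simp
  rw [this]
  simp

theorem brel_support {v : Mat n} {j i : Fin n} {w : Word n}
    (h : (brel k v j i).coeff w ≠ 0) : w = 1 ∨ ∃ s, w = mono v j i s := by
  by_contra hc
  push_neg at hc
  exact h (brel_apply_eq_zero hc.1 hc.2)

/-- Generic tip lemma. -/
theorem isTip_brel {v : Mat n} {j i : Fin n}
    (hinj : Function.Injective (mono v j i)) (s₀ : Fin n)
    (hmax : ∀ s, wordLE (mono v j i s) (mono v j i s₀)) :
    IsTip k (brel k v j i) (mono v j i s₀) := by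
  constructor
  · rw [brel_apply_mono hinj]; exact one_ne_zero
  · intro w hw
    rcases brel_support hw with rfl | ⟨s, rfl⟩
    · refine Or.inr (Or.inl ?_)
      rw [toList_mono]
      simp
    · exact hmax s

/-- Generic tip-uniqueness lemma. -/
theorem tip_eq {v : Mat n} {j i : Fin n}
    (hinj : Function.Injective (mono v j i)) (s₀ : Fin n)
    (hstrict : ∀ s, s ≠ s₀ → ¬ wordLE (mono v j i s₀) (mono v j i s))
    {t : Word n} (ht : IsTip k (brel k v j i) t) : t = mono v j i s₀ := by
  have hle : wordLE (mono v j i s₀) t := by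
    refine ht.2 _ ?_
    rw [brel_apply_mono hinj]; exact one_ne_zero
  rcases brel_support ht.1 with rfl | ⟨s, rfl⟩
  · exfalso
    rcases hle with h | h | ⟨h, _⟩
    · exact mono_ne_one v j i s₀ h
    · rw [toList_mono] at h; simp at h
    · rw [toList_mono] at h; simp at h
  · by_cases hs : s = s₀
    · rw [hs]
    · exact absurd hle (hstrict s hs)

/-! #### Order helpers on two-letter words -/

theorem word_two_inj {a b a' b' : Gen n}
    (h : FreeMonoid.of a * FreeMonoid.of b = FreeMonoid.of a' * FreeMonoid.of b') :
    a = a' ∧ b = b' := by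
  have := congrArg FreeMonoid.toList h
  simpa using this

theorem wordLE_two_of_genLT {a b a' b' : Gen n} (h : genLT a a') :
    wordLE (FreeMonoid.of a * FreeMonoid.of b) (FreeMonoid.of a' * FreeMonoid.of b') := by
  refine Or.inr (Or.inr ⟨by simp, ?_⟩)
  have h1 : FreeMonoid.toList (FreeMonoid.of a * FreeMonoid.of b) = [a, b] := by simp
  have h2 : FreeMonoid.toList (FreeMonoid.of a' * FreeMonoid.of b') = [a', b'] := by simp
  rw [h1, h2]
  exact List.Lex.rel h

theorem not_wordLE_two {a b a' b' : Gen n} (hne : a ≠ a') (h : ¬ genLT a a') :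
    ¬ wordLE (FreeMonoid.of a * FreeMonoid.of b) (FreeMonoid.of a' * FreeMonoid.of b') := by
  rintro (heq | hlen | ⟨_, hlex⟩)
  · exact hne (word_two_inj heq).1
  · simp at hlen
  · have h1 : FreeMonoid.toList (FreeMonoid.of a * FreeMonoid.of b) = [a, b] := by simp
    have h2 : FreeMonoid.toList (FreeMonoid.of a' * FreeMonoid.of b') = [a', b'] := by simp
    rw [h1, h2] at hlex
    cases hlex with
    | cons h' => exact hne rfl
    | rel h' => exact h h'

theorem genLT_white {p q : Fin n × Fin n} (h : toLex p < toLex q) :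
    genLT (n := n) (false, p) (false, q) := Or.inr (Or.inr ⟨rfl, rfl, h⟩)

theorem genLT_black {p q : Fin n × Fin n} (h : toLex q < toLex p) :
    genLT (n := n) (true, p) (true, q) := Or.inr (Or.inl ⟨rfl, rfl, h⟩)

theorem not_genLT_white {p q : Fin n × Fin n} (h : ¬ toLex p < toLex q) :
    ¬ genLT (n := n) (false, p) (false, q) := by
  rintro (⟨h1, _⟩ | ⟨h1, _⟩ | ⟨_, _, h1⟩) <;> first | exact Bool.noConfusion h1 | exact h h1

theorem not_genLT_black {p q : Fin n × Fin n} (h : ¬ toLex q < toLex p) :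
    ¬ genLT (n := n) (true, p) (true, q) := by
  rintro (⟨_, h1⟩ | ⟨_, _, h1⟩ | ⟨h1, _⟩) <;> first | exact Bool.noConfusion h1 | exact h h1

theorem rev_fin1 (hn : 2 ≤ n) : (fin1 n hn).rev = finN n hn := by
  apply Fin.ext
  rw [Fin.val_rev]
  simp [fin1, finN]

/-! #### Concrete descriptions of the four families of monomials -/

theorem mono_u (j i s : Fin n) :
    mono (uMat n) j i s = FreeMonoid.of (false, j, s.rev) * FreeMonoid.of (true, i, s.rev) := by
  simp [mono, uMat, mD, genStar]

theorem mono_uT (j i s : Fin n) :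
    mono (mT (uMat n)) j i s
      = FreeMonoid.of (false, s.rev, j) * FreeMonoid.of (true, s.rev, i) := by
  simp [mono, uMat, mT, mD, genStar]

theorem mono_uS (j i s : Fin n) :
    mono (mS (uMat n)) j i s
      = FreeMonoid.of (true, j.rev, s) * FreeMonoid.of (false, i.rev, s) := by
  simp [mono, uMat, mS, mD, genStar]

theorem mono_uD (j i s : Fin n) :
    mono (mD (uMat n)) j i s
      = FreeMonoid.of (true, s, j.rev) * FreeMonoid.of (false, s, i.rev) := by
  simp [mono, uMat, mD, genStar]

end Statement2Aux

section Statement2Aux2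

variable {k : Type*} [Field k] {n : ℕ}

theorem inj_u (j i : Fin n) : Function.Injective (mono (uMat n) j i) := by
  intro s s' h
  rw [mono_u, mono_u] at h
  obtain ⟨h1, -⟩ := word_two_inj h
  simp only [Prod.mk.injEq] at h1
  exact Fin.rev_injective h1.2.2

theorem inj_uT (j i : Fin n) : Function.Injective (mono (mT (uMat n)) j i) := by
  intro s s' h
  rw [mono_uT, mono_uT] at h
  obtain ⟨h1, -⟩ := word_two_inj h
  simp only [Prod.mk.injEq] at h1
  exact Fin.rev_injective h1.2.1

theorem inj_uS (j i : Fin n) : Function.Injective (mono (mS (uMat n)) j i) := by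
  intro s s' h
  rw [mono_uS, mono_uS] at h
  obtain ⟨h1, -⟩ := word_two_inj h
  simp only [Prod.mk.injEq] at h1
  exact h1.2.2

theorem inj_uD (j i : Fin n) : Function.Injective (mono (mD (uMat n)) j i) := by
  intro s s' h
  rw [mono_uD, mono_uD] at h
  obtain ⟨h1, -⟩ := word_two_inj h
  simp only [Prod.mk.injEq] at h1
  exact h1.2.1

theorem val_pos_of_ne_fin1 (hn : 2 ≤ n) {s : Fin n} (hs : s ≠ fin1 n hn) : 0 < s.val := by
  rcases Nat.eq_zero_or_pos s.val with h | h
  · exact absurd (Fin.ext h) hs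
  · exact h

theorem rev_lt_rev_fin1 (hn : 2 ≤ n) {s : Fin n} (hs : s ≠ fin1 n hn) :
    s.rev < (fin1 n hn).rev := by
  have h0 := val_pos_of_ne_fin1 hn hs
  have h1 := s.isLt
  simp only [Fin.lt_def, Fin.val_rev, fin1]
  omega

theorem fin1_lt_of_ne (hn : 2 ≤ n) {s : Fin n} (hs : s ≠ fin1 n hn) : fin1 n hn < s := by
  have h0 := val_pos_of_ne_fin1 hn hs
  simp only [Fin.lt_def, fin1]
  omega

theorem not_rev_fin1_lt_rev (hn : 2 ≤ n) (s : Fin n) : ¬ (fin1 n hn).rev < s.rev := by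
  simp only [Fin.lt_def, Fin.val_rev, fin1]
  omega

theorem not_lt_fin1 (hn : 2 ≤ n) (s : Fin n) : ¬ s < fin1 n hn := by
  simp only [Fin.lt_def, fin1]
  omega

theorem hstrict_u (hn : 2 ≤ n) (j i : Fin n) :
    ∀ s, s ≠ fin1 n hn →
      ¬ wordLE (mono (uMat n) j i (fin1 n hn)) (mono (uMat n) j i s) := by
  intro s hs
  rw [mono_u, mono_u]
  refine not_wordLE_two ?_ (not_genLT_white ?_)
  · intro h
    simp only [Prod.mk.injEq] at h
    exact hs (Fin.rev_injective h.2.2).symm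
  · intro h
    rcases Prod.Lex.lt_iff.mp h with h | ⟨-, h⟩
    · exact absurd h (lt_irrefl j)
    · exact not_rev_fin1_lt_rev hn s h

theorem hstrict_uT (hn : 2 ≤ n) (j i : Fin n) :
    ∀ s, s ≠ fin1 n hn →
      ¬ wordLE (mono (mT (uMat n)) j i (fin1 n hn)) (mono (mT (uMat n)) j i s) := by
  intro s hs
  rw [mono_uT, mono_uT]
  refine not_wordLE_two ?_ (not_genLT_white ?_)
  · intro h
    simp only [Prod.mk.injEq] at h
    exact hs (Fin.rev_injective h.2.1).symm
  · intro h
    rcases Prod.Lex.lt_iff.mp h with h | ⟨-, h⟩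
    · exact not_rev_fin1_lt_rev hn s h
    · exact absurd h (lt_irrefl j)

theorem hstrict_uS (hn : 2 ≤ n) (j i : Fin n) :
    ∀ s, s ≠ fin1 n hn →
      ¬ wordLE (mono (mS (uMat n)) j i (fin1 n hn)) (mono (mS (uMat n)) j i s) := by
  intro s hs
  rw [mono_uS, mono_uS]
  refine not_wordLE_two ?_ (not_genLT_black ?_)
  · intro h
    simp only [Prod.mk.injEq] at h
    exact hs h.2.2.symm
  · intro h
    rcases Prod.Lex.lt_iff.mp h with h | ⟨-, h⟩
    · exact absurd h (lt_irrefl j.rev)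
    · exact not_lt_fin1 hn s h

theorem hstrict_uD (hn : 2 ≤ n) (j i : Fin n) :
    ∀ s, s ≠ fin1 n hn →
      ¬ wordLE (mono (mD (uMat n)) j i (fin1 n hn)) (mono (mD (uMat n)) j i s) := by
  intro s hs
  rw [mono_uD, mono_uD]
  refine not_wordLE_two ?_ (not_genLT_black ?_)
  · intro h
    simp only [Prod.mk.injEq] at h
    exact hs h.2.1.symm
  · intro h
    rcases Prod.Lex.lt_iff.mp h with h | ⟨-, h⟩
    · exact not_lt_fin1 hn s h
    · exact absurd h (lt_irrefl j.rev)

/-- The tip of any relation `b^v_{j,i}`, `v ∈ V`, is the `fin1`-th monomial. -/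
theorem tip_of_V (hn : 2 ≤ n) {v : Mat n} (hv : v ∈ V n) (j i : Fin n) {t : Word n}
    (ht : IsTip k (brel k v j i) t) : t = mono v j i (fin1 n hn) := by
  simp only [V, Set.mem_insert_iff, Set.mem_singleton_iff] at hv
  rcases hv with rfl | rfl | rfl | rfl
  · exact tip_eq (inj_u j i) _ (hstrict_u hn j i) ht
  · exact tip_eq (inj_uT j i) _ (hstrict_uT hn j i) ht
  · exact tip_eq (inj_uS j i) _ (hstrict_uS hn j i) ht
  · exact tip_eq (inj_uD j i) _ (hstrict_uD hn j i) ht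

theorem rev_eq_fin1 (hn : 2 ≤ n) {j : Fin n} (h : j.rev = fin1 n hn) : j = finN n hn := by
  have := congrArg Fin.rev h
  rwa [Fin.rev_rev, rev_fin1 hn] at this

/-- The case analysis: if two relations with generating matrices in `V` have equal tips and
are distinct, then they form the standard inclusion ambiguity. -/
theorem mono_fin1_eq (hn : 2 ≤ n) {v v' : Mat n} (hv : v ∈ V n) (hv' : v' ∈ V n)
    {j i j' i' : Fin n}
    (h : mono v j i (fin1 n hn) = mono v' j' i' (fin1 n hn))
    (hne : brel k v j i ≠ brel k v' j' i') :
    v = mT v' ∧ j = finN n hn ∧ i = finN n hn ∧ j' = finN n hn ∧ i' = finN n hn := by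
  simp only [V, Set.mem_insert_iff, Set.mem_singleton_iff] at hv hv'
  rcases hv with rfl | rfl | rfl | rfl <;> rcases hv' with rfl | rfl | rfl | rfl
  · -- u, u : diagonal
    rw [mono_u, mono_u] at h
    obtain ⟨h1, h2⟩ := word_two_inj h
    simp only [Prod.mk.injEq] at h1 h2
    obtain rfl := h1.2.1
    obtain rfl := h2.2.1
    exact absurd rfl hne
  · -- u, uT
    rw [mono_u, mono_uT, rev_fin1 hn] at h
    obtain ⟨h1, h2⟩ := word_two_inj h
    simp only [Prod.mk.injEq] at h1 h2
    exact ⟨rfl, h1.2.1, h2.2.1, h1.2.2.symm, h2.2.2.symm⟩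
  · -- mixed colors
    exfalso
    rw [mono_u, mono_uS] at h
    have hcol := (word_two_inj h).1
    simp [Prod.ext_iff] at hcol
  · -- mixed colors
    exfalso
    rw [mono_u, mono_uD] at h
    have hcol := (word_two_inj h).1
    simp [Prod.ext_iff] at hcol
  · -- uT, u
    rw [mono_uT, mono_u, rev_fin1 hn] at h
    obtain ⟨h1, h2⟩ := word_two_inj h
    simp only [Prod.mk.injEq] at h1 h2
    exact ⟨rfl, h1.2.2, h2.2.2, h1.2.1.symm, h2.2.1.symm⟩
  · -- uT, uT : diagonal
    rw [mono_uT, mono_uT] at h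
    obtain ⟨h1, h2⟩ := word_two_inj h
    simp only [Prod.mk.injEq] at h1 h2
    obtain rfl := h1.2.2
    obtain rfl := h2.2.2
    exact absurd rfl hne
  · -- mixed colors
    exfalso
    rw [mono_uT, mono_uS] at h
    have hcol := (word_two_inj h).1
    simp [Prod.ext_iff] at hcol
  · -- mixed colors
    exfalso
    rw [mono_uT, mono_uD] at h
    have hcol := (word_two_inj h).1
    simp [Prod.ext_iff] at hcol
  · -- mixed colors
    exfalso
    rw [mono_uS, mono_u] at h
    have hcol := (word_two_inj h).1
    simp [Prod.ext_iff] at hcol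
  · -- mixed colors
    exfalso
    rw [mono_uS, mono_uT] at h
    have hcol := (word_two_inj h).1
    simp [Prod.ext_iff] at hcol
  · -- uS, uS : diagonal
    rw [mono_uS, mono_uS] at h
    obtain ⟨h1, h2⟩ := word_two_inj h
    simp only [Prod.mk.injEq] at h1 h2
    obtain rfl := Fin.rev_injective h1.2.1
    obtain rfl := Fin.rev_injective h2.2.1
    exact absurd rfl hne
  · -- uS, uD
    rw [mono_uS, mono_uD] at h
    obtain ⟨h1, h2⟩ := word_two_inj h
    simp only [Prod.mk.injEq] at h1 h2
    exact ⟨rfl, rev_eq_fin1 hn h1.2.1, rev_eq_fin1 hn h2.2.1,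
      rev_eq_fin1 hn h1.2.2.symm, rev_eq_fin1 hn h2.2.2.symm⟩
  · -- mixed colors
    exfalso
    rw [mono_uD, mono_u] at h
    have hcol := (word_two_inj h).1
    simp [Prod.ext_iff] at hcol
  · -- mixed colors
    exfalso
    rw [mono_uD, mono_uT] at h
    have hcol := (word_two_inj h).1
    simp [Prod.ext_iff] at hcol
  · -- uD, uS
    rw [mono_uD, mono_uS] at h
    obtain ⟨h1, h2⟩ := word_two_inj h
    simp only [Prod.mk.injEq] at h1 h2
    exact ⟨rfl, rev_eq_fin1 hn h1.2.2, rev_eq_fin1 hn h2.2.2,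
      rev_eq_fin1 hn h1.2.1.symm, rev_eq_fin1 hn h2.2.1.symm⟩
  · -- uD, uD : diagonal
    rw [mono_uD, mono_uD] at h
    obtain ⟨h1, h2⟩ := word_two_inj h
    simp only [Prod.mk.injEq] at h1 h2
    obtain rfl := Fin.rev_injective h1.2.2
    obtain rfl := Fin.rev_injective h2.2.2
    exact absurd rfl hne

end Statement2Aux2


theorem statement_2 (k : Type*) [Field k] (n : ℕ) (hn : 2 ≤ n) :
    ∀ (g g' : FreeAlg k n) (w₁ w₂ : Word n),
      IsInclusionAmbiguity k (rels k n) g g' w₁ w₂ →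
      ∃ v ∈ V n, g = brel k (mT v) (finN n hn) (finN n hn) ∧
        g' = brel k v (finN n hn) (finN n hn) ∧ w₁ = 1 ∧ w₂ = 1 := by
  intro g g' w₁ w₂ H
  obtain ⟨hg, hg', -, -, hne, t, t', ht, ht', hw⟩ := H
  obtain ⟨v, hv, j, i, rfl⟩ := hg
  obtain ⟨v', hv', j', i', rfl⟩ := hg'
  have htv := tip_of_V (k := k) hn hv j i ht
  have htv' := tip_of_V (k := k) hn hv' j' i' ht'
  subst htv htv'
  -- length considerations force `w₁ = w₂ = 1`
  have hlen := congrArg (fun w : Word n => (FreeMonoid.toList w).length) hw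
  simp only [FreeMonoid.toList_mul, List.length_append, toList_mono, List.length_cons,
    List.length_nil] at hlen
  have hw₁ : w₁ = 1 := by
    apply FreeMonoid.toList.injective
    have : (FreeMonoid.toList w₁).length = 0 := by omega
    simpa using List.length_eq_zero_iff.mp this
  have hw₂ : w₂ = 1 := by
    apply FreeMonoid.toList.injective
    have : (FreeMonoid.toList w₂).length = 0 := by omega
    simpa using List.length_eq_zero_iff.mp this
  rw [hw₁, hw₂, one_mul, mul_one] at hw
  obtain ⟨hvv, hj, hi, hj', hi'⟩ := mono_fin1_eq hn hv hv' hw hne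
  refine ⟨v', hv', ?_, ?_, hw₁, hw₂⟩
  · rw [hj, hi, hvv]
  · rw [hj', hi']


end UnPlusAnick
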